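/- There exists a nonnegative real sequence {a_n}_{n≥1} which is a mean value bounded variation sequence (MVBVS) but is not a group bounded variation sequence in the general sense; i.e., for every integer N_0 ≥ 1 and every constant C > 0 there is some n ≥ 1 with ∑_{k=n}^{2n} |a_k − a_{k+1}| > C · max_{n ≤ k < n+N_0} a_k. -/

import Mathlib

open Filter

/-- A nonnegative sequence (indexed from 1) is a mean value bounded variation sequence. -/
def IsMVBVS (a : ℕ → ℝ) : Prop :=
  ∃ lam : ℝ, 2 ≤ lam ∧ ∃ C : ℝ, 0 < C ∧ ∀ n : ℕ, 1 ≤ n →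
    ∑ k ∈ Finset.Icc n (2 * n), |a k - a (k + 1)| ≤
      (C / n) * ∑ k ∈ Finset.Icc ⌊(n : ℝ) / lam⌋₊ ⌊lam * n⌋₊, a k

noncomputable def aseq : ℕ → ℝ := fun n => if Even (Nat.log 2 n) then 1 else 0

lemma aseq_nonneg (n : ℕ) : 0 ≤ aseq n := by unfold aseq; split <;> norm_num

lemma aseq_le_one (n : ℕ) : aseq n ≤ 1 := by unfold aseq; split <;> norm_num

lemma aseq_eq_one {b k : ℕ} (hb : Even b) (h1 : 2^b ≤ k) (h2 : k < 2^(b+1)) : aseq k = 1 := by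
  unfold aseq
  rw [Nat.log_eq_of_pow_le_of_lt_pow h1 h2, if_pos hb]

lemma aseq_eq_zero {b k : ℕ} (hb : ¬ Even b) (h1 : 2^b ≤ k) (h2 : k < 2^(b+1)) : aseq k = 0 := by
  unfold aseq
  rw [Nat.log_eq_of_pow_le_of_lt_pow h1 h2, if_neg hb]

lemma log_succ_eq {k : ℕ} (hk : 1 ≤ k) (h : k + 1 ≠ 2 ^ Nat.log 2 (k+1)) :
    Nat.log 2 (k+1) = Nat.log 2 k := by
  set m := Nat.log 2 k with hm
  have h1 : 2^m ≤ k := Nat.pow_log_le_self 2 (by omega)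
  have h2 : k < 2^(m+1) := Nat.lt_pow_succ_log_self (by norm_num) k
  have h3 : k + 1 ≠ 2^(m+1) := by
    intro he
    apply h
    rw [he, Nat.log_pow (by norm_num)]
  exact Nat.log_eq_of_pow_le_of_lt_pow (le_trans h1 (by omega)) (by omega)

lemma pow_aux {n k k' p q : ℕ} (hk1 : n ≤ k) (hk2 : k' ≤ 2*n)
    (e : k + 1 = 2^p) (e' : k' + 1 = 2^q) : q ≤ p := by
  by_contra hcon
  have h1 : 2^(p+1) ≤ 2^q := Nat.pow_le_pow_right (by norm_num) (by omega)
  have h2 : (2:ℕ)^(p+1) = 2 * 2^p := by ring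
  omega

lemma var_le_one {n : ℕ} (hn : 1 ≤ n) :
    ∑ k ∈ Finset.Icc n (2*n), |aseq k - aseq (k+1)| ≤ 1 := by
  have hstep : ∀ k ∈ Finset.Icc n (2*n), |aseq k - aseq (k+1)| ≤
      (if k + 1 = 2 ^ Nat.log 2 (k+1) then (1:ℝ) else 0) := by
    intro k hk
    simp only [Finset.mem_Icc] at hk
    split
    · have h1 := aseq_nonneg k
      have h2 := aseq_le_one k
      have h3 := aseq_nonneg (k+1)
      have h4 := aseq_le_one (k+1)
      rw [abs_sub_le_iff]
      constructor <;> linarith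
    · next h =>
      have : aseq k = aseq (k+1) := by
        unfold aseq; rw [log_succ_eq (by omega) h]
      rw [this, sub_self, abs_zero]
  calc ∑ k ∈ Finset.Icc n (2*n), |aseq k - aseq (k+1)|
      ≤ ∑ k ∈ Finset.Icc n (2*n), (if k + 1 = 2 ^ Nat.log 2 (k+1) then (1:ℝ) else 0) :=
        Finset.sum_le_sum hstep
    _ = ((Finset.Icc n (2*n)).filter (fun k => k + 1 = 2 ^ Nat.log 2 (k+1))).card := by
        rw [Finset.sum_boole]
    _ ≤ 1 := by
        have hcard : ((Finset.Icc n (2*n)).filter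
            (fun k => k + 1 = 2 ^ Nat.log 2 (k+1))).card ≤ 1 := by
          apply Finset.card_le_one.mpr
          intro k hk k' hk'
          simp only [Finset.mem_filter, Finset.mem_Icc] at hk hk'
          have h1 : Nat.log 2 (k'+1) ≤ Nat.log 2 (k+1) :=
            pow_aux hk.1.1 hk'.1.2 hk.2 hk'.2
          have h2 : Nat.log 2 (k+1) ≤ Nat.log 2 (k'+1) :=
            pow_aux hk'.1.1 hk.1.2 hk'.2 hk.2
          have h3 : Nat.log 2 (k+1) = Nat.log 2 (k'+1) := le_antisymm h2 h1
          have e := hk.2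
          have e' := hk'.2
          rw [← h3] at e'
          omega
        exact_mod_cast hcard

lemma aseq_mvbvs : IsMVBVS aseq := by
  refine ⟨4, by norm_num, 4, by norm_num, ?_⟩
  intro n hn
  have hfl : ⌊(n:ℝ)/4⌋₊ = n / 4 := by
    rw [show ((4:ℝ)) = ((4:ℕ):ℝ) by norm_num, Nat.floor_div_natCast, Nat.floor_natCast]
  have hfu : ⌊(4:ℝ)*(n:ℝ)⌋₊ = 4*n := by
    rw [show (4:ℝ)*(n:ℝ) = ((4*n : ℕ):ℝ) by push_cast; ring, Nat.floor_natCast]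
  rw [hfl, hfu]
  set j := Nat.log 2 n with hj
  set b := if Even j then j else j - 1 with hb
  have hbprop : b ≤ j ∧ j ≤ b + 1 ∧ Even b := by
    rw [hb]
    split
    · next h => exact ⟨le_refl _, by omega, h⟩
    · next h =>
      rw [Nat.not_even_iff] at h
      refine ⟨by omega, by omega, ?_⟩
      rw [Nat.even_iff]; omega
  have h2j : 2^j ≤ n := Nat.pow_log_le_self 2 (by omega)
  have hj2 : n < 2^(j+1) := Nat.lt_pow_succ_log_self (by norm_num) n
  have hn4 : n < 4 * 2^b := by
    have h1 : 2^(j+1) ≤ 2^(b+2) := Nat.pow_le_pow_right (by norm_num) (by omega)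
    have h2 : (2:ℕ)^(b+2) = 4 * 2^b := by ring
    omega
  have hsub : Finset.Icc (2^b) (2^(b+1) - 1) ⊆ Finset.Icc (n/4) (4*n) := by
    apply Finset.Icc_subset_Icc
    · have : n / 4 < 2^b := (Nat.div_lt_iff_lt_mul (by norm_num)).mpr (by omega)
      omega
    · have h1 : 2^(b+1) ≤ 2^(j+1) := Nat.pow_le_pow_right (by norm_num) (by omega)
      have h2 : (2:ℕ)^(j+1) = 2 * 2^j := by ring
      omega
  have hblock : ∑ k ∈ Finset.Icc (2^b) (2^(b+1) - 1), aseq k = 2^b := by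
    have heach : ∀ k ∈ Finset.Icc (2^b) (2^(b+1) - 1), aseq k = 1 := by
      intro k hk
      simp only [Finset.mem_Icc] at hk
      have hp : 1 ≤ (2:ℕ)^(b+1) := Nat.one_le_two_pow
      exact aseq_eq_one hbprop.2.2 hk.1 (by omega)
    rw [Finset.sum_congr rfl heach, Finset.sum_const, Nat.card_Icc]
    have hp : (2:ℕ)^(b+1) = 2 * 2^b := by ring
    have hp1 : 1 ≤ (2:ℕ)^b := Nat.one_le_two_pow
    rw [show 2^(b+1) - 1 + 1 - 2^b = 2^b by omega]
    simp
  have hbig : (2^b : ℝ) ≤ ∑ k ∈ Finset.Icc (n/4) (4*n), aseq k := by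
    rw [← hblock]
    exact Finset.sum_le_sum_of_subset_of_nonneg hsub (fun i _ _ => aseq_nonneg i)
  have hn0 : (0:ℝ) < n := by exact_mod_cast hn
  calc ∑ k ∈ Finset.Icc n (2*n), |aseq k - aseq (k+1)| ≤ 1 := var_le_one hn
    _ ≤ (4 / n) * ∑ k ∈ Finset.Icc (n/4) (4*n), aseq k := by
        rw [div_mul_eq_mul_div, le_div_iff₀ hn0, one_mul]
        have hc : (n:ℝ) ≤ 4 * (2^b : ℝ) := by
          have : (n:ℝ) < ((4 * 2^b : ℕ) : ℝ) := by exact_mod_cast hn4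
          push_cast at this
          linarith
        linarith

theorem stmt2 :
    ∃ a : ℕ → ℝ,
      (∀ n : ℕ, 1 ≤ n → 0 ≤ a n) ∧
      IsMVBVS a ∧
      ∀ N₀ : ℕ, 1 ≤ N₀ → ∀ C : ℝ, 0 < C → ∃ n : ℕ, 1 ≤ n ∧
        C * sSup (a '' Set.Ico n (n + N₀)) <
          ∑ k ∈ Finset.Icc n (2 * n), |a k - a (k + 1)| := by
  refine ⟨aseq, fun n _ => aseq_nonneg n, aseq_mvbvs, ?_⟩
  intro N₀ hN C hC
  set j := 2 * N₀ + 1 with hjdef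
  have hodd : ¬ Even j := by rw [Nat.even_iff]; omega
  have hN2 : N₀ ≤ 2^j := by
    have : N₀ < 2^N₀ := Nat.lt_two_pow_self (n := N₀)
    have : 2^N₀ ≤ 2^j := Nat.pow_le_pow_right (by norm_num) (by omega)
    omega
  have hp1 : 1 ≤ (2:ℕ)^j := Nat.one_le_two_pow
  have hps : (2:ℕ)^(j+1) = 2 * 2^j := by ring
  refine ⟨2^j, hp1, ?_⟩
  have himg : aseq '' Set.Ico (2^j) (2^j + N₀) = {0} := by
    apply Set.eq_of_subset_of_subset
    · rintro x ⟨k, hk, rfl⟩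
      simp only [Set.mem_Ico] at hk
      have : aseq k = 0 := aseq_eq_zero hodd hk.1 (by omega)
      simp [this]
    · intro x hx
      simp only [Set.mem_singleton_iff] at hx
      refine ⟨2^j, ⟨le_refl _, by omega⟩, ?_⟩
      rw [hx]
      exact aseq_eq_zero hodd (le_refl _) (by omega)
  rw [himg, csSup_singleton, mul_zero]
  have hmem : 2^(j+1) - 1 ∈ Finset.Icc (2^j) (2 * 2^j) := by
    simp only [Finset.mem_Icc]; omega
  have hterm : |aseq (2^(j+1) - 1) - aseq (2^(j+1) - 1 + 1)| = 1 := by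
    have h1 : aseq (2^(j+1) - 1) = 0 := aseq_eq_zero hodd (by omega) (by omega)
    have h2 : 2^(j+1) - 1 + 1 = 2^(j+1) := by omega
    have h3 : aseq (2^(j+1)) = 1 := by
      refine aseq_eq_one ?_ (le_refl _) (Nat.pow_lt_pow_right (by norm_num) (by omega))
      rw [Nat.even_iff]; omega
    rw [h2, h1, h3]; norm_num
  have hsum : (1:ℝ) ≤ ∑ k ∈ Finset.Icc (2^j) (2 * 2^j), |aseq k - aseq (k+1)| := by
    rw [← hterm]
    exact Finset.single_le_sum (f := fun k => |aseq k - aseq (k+1)|) (fun i _ => abs_nonneg _) hmem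
  linarith
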